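/- Let a, b, c be pairwise distinct letters and L = {[a]}*·{[b]}·{[c]}*. There is no pair of languages (P₁, P₂) such that P₁·P₂ = L and for all nonempty languages X, Y with X·Y ⊆ L one has X ⊆ P₁ and Y ⊆ P₂. That is, the design with target L and kernel string f₁ f₂ admits no perfect typing. -/

import Mathlib

open Computability

private lemma mem_single_star_chars {α : Type} {s : α} {w : List α}
    (h : w ∈ ({[s]} : Language α)∗) : ∀ ch ∈ w, ch = s := by
  rw [Language.mem_kstar] at h
  obtain ⟨S, rfl, hS⟩ := h
  intro ch hch
  rw [List.mem_flatten] at hch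
  obtain ⟨l, hl, hch⟩ := hch
  have : l = [s] := hS l hl
  subst this
  simpa using hch

theorem no_perfect_typing_astar_b_cstar {α : Type} (a b c : α)
    (hab : a ≠ b) (hac : a ≠ c) (hbc : b ≠ c) :
    ¬ ∃ P₁ P₂ : Language α,
        P₁ * P₂ = ({[a]} : Language α)∗ * ({[b]} : Language α) * ({[c]} : Language α)∗ ∧
        ∀ X Y : Language α, (∃ w, w ∈ X) → (∃ w, w ∈ Y) →
          X * Y ≤ ({[a]} : Language α)∗ * ({[b]} : Language α) * ({[c]} : Language α)∗ →
          X ≤ P₁ ∧ Y ≤ P₂ := by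
  rintro ⟨P₁, P₂, hmul, hall⟩
  set L : Language α := ({[a]} : Language α)∗ * ({[b]} : Language α) * ({[c]} : Language α)∗
    with hL
  have hbL : [b] ∈ L := by
    rw [hL]
    refine ⟨[b], ⟨[], Language.nil_mem_kstar _, [b], rfl, rfl⟩, [], Language.nil_mem_kstar _, ?_⟩
    simp
  have hone : ([] : List α) ∈ (1 : Language α) := by simp [Language.mem_one]
  have h1 : L ≤ P₁ := (hall L 1 ⟨[b], hbL⟩ ⟨[], hone⟩ (by rw [mul_one])).1
  have h2 : L ≤ P₂ := (hall 1 L ⟨[], hone⟩ ⟨[b], hbL⟩ (by rw [one_mul])).2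
  have hbb : ([b] ++ [b] : List α) ∈ P₁ * P₂ := ⟨[b], h1 hbL, [b], h2 hbL, rfl⟩
  rw [hmul] at hbb
  obtain ⟨m, ⟨x, hx, u, hu, hxu⟩, n, hn, hmn⟩ := hbb
  have hu' : u = [b] := hu
  subst hu'
  subst hxu
  have hx' := mem_single_star_chars hx
  have hn' := mem_single_star_chars hn
  have : b ∈ x ∨ b ∈ n := by
    have hlen : x.length + 1 + n.length = 2 := by
      have := congrArg List.length hmn
      simp at this
      omega
    have : x.length + n.length = 1 := by omega
    rcases Nat.eq_zero_or_pos x.length with hx0 | hx0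
    · right
      have hn1 : n.length = 1 := by omega
      have hx0' : x = [] := List.length_eq_zero_iff.mp hx0
      subst hx0'
      -- [b] ++ n = [b, b], so n = [b]
      have : n = [b] := by
        simpa using hmn
      simp [this]
    · left
      have hx1 : x.length = 1 := by omega
      obtain ⟨y, hy⟩ := List.length_eq_one_iff.mp hx1
      subst hy
      have : y = b := by
        have := congrArg (fun l => l.head?) hmn
        simpa using this
      simp [this]
  rcases this with hbx | hbn
  · exact hab (hx' b hbx).symm
  · exact hbc.symm (hn' b hbn).symm
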